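/- For all n, m ≥ 1, the complete bipartite graph K_{n,m} is indecomposable (every Nash equilibrium strategy profile on K_{n,m} is constant) if and only if n and m are coprime. -/

import Mathlib

open SimpleGraph

/-- Payoff of vertex `v` for strategy `c` under profile `u`: the number of
neighbors of `v` playing strategy `c`. -/
noncomputable def payoff {V C : Type*} (G : SimpleGraph V) (u : V → C) (v : V) (c : C) : ℕ :=
  {x | G.Adj v x ∧ u x = c}.ncard

/-- `u` is a Nash equilibrium of the structured coordination game with
neutral options on `G`. -/
def IsNash {V C : Type*} (G : SimpleGraph V) (u : V → C) : Prop :=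
  ∀ (v : V) (c : C), payoff G u v c ≤ payoff G u v (u v)

section aux

variable {n m : ℕ} {C : Type} [DecidableEq C]

lemma payoff_inl (u : Fin n ⊕ Fin m → C) (i : Fin n) (c : C) :
    payoff (completeBipartiteGraph (Fin n) (Fin m)) u (Sum.inl i) c
      = (Finset.univ.filter fun j : Fin m => u (Sum.inr j) = c).card := by
  have h : {x | (completeBipartiteGraph (Fin n) (Fin m)).Adj (Sum.inl i) x ∧ u x = c}
      = (((Finset.univ.filter fun j : Fin m => u (Sum.inr j) = c).image Sum.inr :
          Finset (Fin n ⊕ Fin m)) : Set (Fin n ⊕ Fin m)) := by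
    ext x
    cases x <;> simp [completeBipartiteGraph]
  rw [payoff, h, Set.ncard_coe_finset, Finset.card_image_of_injective _ Sum.inr_injective]

lemma payoff_inr (u : Fin n ⊕ Fin m → C) (j : Fin m) (c : C) :
    payoff (completeBipartiteGraph (Fin n) (Fin m)) u (Sum.inr j) c
      = (Finset.univ.filter fun i : Fin n => u (Sum.inl i) = c).card := by
  have h : {x | (completeBipartiteGraph (Fin n) (Fin m)).Adj (Sum.inr j) x ∧ u x = c}
      = (((Finset.univ.filter fun i : Fin n => u (Sum.inl i) = c).image Sum.inl :
          Finset (Fin n ⊕ Fin m)) : Set (Fin n ⊕ Fin m)) := by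
    ext x
    cases x <;> simp [completeBipartiteGraph]
  rw [payoff, h, Set.ncard_coe_finset, Finset.card_image_of_injective _ Sum.inl_injective]

lemma modcount {N d : ℕ} (hd : 0 < d) (hdN : d ∣ N) (c : ℕ) (hc : c < d) :
    (Finset.univ.filter fun j : Fin N => j.val % d = c).card = N / d := by
  rw [← Fintype.card_fin (N / d), ← Finset.card_univ]
  refine Finset.card_nbij' (fun j => ⟨j.val / d, ?_⟩) (fun k => ⟨k.val * d + c, ?_⟩) ?_ ?_ ?_ ?_
  · exact Nat.div_lt_div_of_lt_of_dvd hdN j.isLt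
  · calc k.val * d + c < k.val * d + d := by omega
      _ = (k.val + 1) * d := by ring
      _ ≤ (N / d) * d := Nat.mul_le_mul_right d k.isLt
      _ = N := Nat.div_mul_cancel hdN
  · intro a _; exact Finset.mem_univ _
  · intro k _
    simp only [Finset.mem_coe, Finset.mem_filter, Finset.mem_univ, true_and]
    rw [Nat.mul_comm, Nat.mul_add_mod, Nat.mod_eq_of_lt hc]
  · intro j hj
    simp only [Finset.mem_coe, Finset.mem_filter, Finset.mem_univ, true_and] at hj
    apply Fin.ext
    simp only
    conv_rhs => rw [← Nat.div_add_mod j.val d, hj]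
    ring
  · intro k _
    apply Fin.ext
    simp only
    rw [Nat.mul_comm, Nat.mul_add_div hd, Nat.div_eq_of_lt hc, Nat.add_zero]

end aux

theorem completeBipartite_indecomposable_iff_coprime (n m : ℕ) (hn : 1 ≤ n) (hm : 1 ≤ m) :
    (∀ (C : Type) (u : Fin n ⊕ Fin m → C),
        IsNash (completeBipartiteGraph (Fin n) (Fin m)) u → ∀ v w, u v = u w) ↔
      Nat.Coprime n m := by
  constructor
  · -- indecomposable → coprime
    intro H
    by_contra hc
    set d := Nat.gcd n m with hd
    have hd0 : 0 < d := Nat.gcd_pos_of_pos_left m hn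
    have hd2 : 2 ≤ d := by
      have hne : d ≠ 1 := fun h1 => hc (by rwa [Nat.Coprime, ← hd])
      omega
    have hdn : d ∣ n := Nat.gcd_dvd_left n m
    have hdm : d ∣ m := Nat.gcd_dvd_right n m
    have hn2 : 2 ≤ n := le_trans hd2 (Nat.le_of_dvd hn hdn)
    set u : Fin n ⊕ Fin m → Fin d := fun x =>
      match x with
      | Sum.inl i => ⟨i.val % d, Nat.mod_lt _ hd0⟩
      | Sum.inr j => ⟨j.val % d, Nat.mod_lt _ hd0⟩ with hu
    have hcount_r : ∀ c : Fin d,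
        (Finset.univ.filter fun j : Fin m => u (Sum.inr j) = c).card = m / d := by
      intro c
      have : ∀ j : Fin m, (u (Sum.inr j) = c) ↔ (j.val % d = c.val) := by
        intro j; simp [hu, Fin.ext_iff]
      simp only [this]
      exact modcount hd0 hdm c.val c.isLt
    have hcount_l : ∀ c : Fin d,
        (Finset.univ.filter fun i : Fin n => u (Sum.inl i) = c).card = n / d := by
      intro c
      have : ∀ i : Fin n, (u (Sum.inl i) = c) ↔ (i.val % d = c.val) := by
        intro i; simp [hu, Fin.ext_iff]
      simp only [this]
      exact modcount hd0 hdn c.val c.isLt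
    have hnash : IsNash (completeBipartiteGraph (Fin n) (Fin m)) u := by
      intro v c
      cases v with
      | inl i => rw [payoff_inl, payoff_inl, hcount_r, hcount_r]
      | inr j => rw [payoff_inr, payoff_inr, hcount_l, hcount_l]
    have := H (Fin d) u hnash (Sum.inl ⟨0, by omega⟩) (Sum.inl ⟨1, by omega⟩)
    simp only [hu, Fin.ext_iff] at this
    rw [Nat.zero_mod, Nat.mod_eq_of_lt (by omega)] at this
    omega
  · -- coprime → indecomposable
    intro hco C u hu v w
    classical
    set i0 : Fin n := ⟨0, hn⟩
    set j0 : Fin m := ⟨0, hm⟩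
    have h1 : ∀ (i : Fin n) (c : C),
        (Finset.univ.filter fun j : Fin m => u (Sum.inr j) = c).card ≤
          (Finset.univ.filter fun j : Fin m => u (Sum.inr j) = u (Sum.inl i)).card := by
      intro i c
      simpa only [payoff_inl] using hu (Sum.inl i) c
    have h2 : ∀ (j : Fin m) (c : C),
        (Finset.univ.filter fun i : Fin n => u (Sum.inl i) = c).card ≤
          (Finset.univ.filter fun i : Fin n => u (Sum.inl i) = u (Sum.inr j)).card := by
      intro j c
      simpa only [payoff_inr] using hu (Sum.inr j) c
    set T : Finset C := Finset.univ.image (fun i : Fin n => u (Sum.inl i)) with hT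
    set T' : Finset C := Finset.univ.image (fun j : Fin m => u (Sum.inr j)) with hT'
    -- every left value appears on the right
    have hsub : T ⊆ T' := by
      intro c hc
      obtain ⟨i, _, rfl⟩ := Finset.mem_image.mp hc
      have hpos : 0 < (Finset.univ.filter fun j : Fin m =>
          u (Sum.inr j) = u (Sum.inl i)).card := by
        refine lt_of_lt_of_le ?_ (h1 i (u (Sum.inr j0)))
        refine Finset.card_pos.mpr ⟨j0, ?_⟩
        simp
      obtain ⟨j, hj⟩ := Finset.card_pos.mp hpos
      simp only [Finset.mem_filter, Finset.mem_univ, true_and] at hj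
      exact Finset.mem_image.mpr ⟨j, Finset.mem_univ j, hj⟩
    have hsub' : T' ⊆ T := by
      intro c hc
      obtain ⟨j, _, rfl⟩ := Finset.mem_image.mp hc
      have hpos : 0 < (Finset.univ.filter fun i : Fin n =>
          u (Sum.inl i) = u (Sum.inr j)).card := by
        refine lt_of_lt_of_le ?_ (h2 j (u (Sum.inl i0)))
        refine Finset.card_pos.mpr ⟨i0, ?_⟩
        simp
      obtain ⟨i, hi⟩ := Finset.card_pos.mp hpos
      simp only [Finset.mem_filter, Finset.mem_univ, true_and] at hi
      exact Finset.mem_image.mpr ⟨i, Finset.mem_univ i, hi⟩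
    have hTeq : T = T' := Finset.Subset.antisymm hsub hsub'
    -- left counts are constant on T
    have hclconst : ∀ c ∈ T,
        (Finset.univ.filter fun i : Fin n => u (Sum.inl i) = c).card =
          (Finset.univ.filter fun i : Fin n => u (Sum.inl i) = u (Sum.inl i0)).card := by
      intro c hc
      have hc' : c ∈ T' := hTeq ▸ hc
      obtain ⟨j, _, rfl⟩ := Finset.mem_image.mp hc'
      have hi0 : u (Sum.inl i0) ∈ T' := hsub (Finset.mem_image.mpr ⟨i0, Finset.mem_univ _, rfl⟩)
      obtain ⟨j', hj'⟩ := Finset.mem_image.mp hi0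
      refine le_antisymm ?_ ?_
      · have := h2 j' (u (Sum.inr j))
        rwa [hj'.2] at this
      · exact h2 j (u (Sum.inl i0))
    -- right counts are constant on T
    have hcrconst : ∀ c ∈ T,
        (Finset.univ.filter fun j : Fin m => u (Sum.inr j) = c).card =
          (Finset.univ.filter fun j : Fin m => u (Sum.inr j) = u (Sum.inr j0)).card := by
      intro c hc
      obtain ⟨i, _, rfl⟩ := Finset.mem_image.mp hc
      have hj0 : u (Sum.inr j0) ∈ T := hsub' (Finset.mem_image.mpr ⟨j0, Finset.mem_univ _, rfl⟩)
      obtain ⟨i', hi'⟩ := Finset.mem_image.mp hj0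
      refine le_antisymm ?_ ?_
      · have := h1 i' (u (Sum.inl i))
        rwa [hi'.2] at this
      · exact h1 i (u (Sum.inr j0))
    -- n = |T| * L
    have hnsum : n = T.card *
        (Finset.univ.filter fun i : Fin n => u (Sum.inl i) = u (Sum.inl i0)).card := by
      have h0 := Finset.card_eq_sum_card_image (fun i : Fin n => u (Sum.inl i)) Finset.univ
      rw [Finset.card_univ, Fintype.card_fin] at h0
      calc n = ∑ b ∈ T, (Finset.univ.filter fun i : Fin n => u (Sum.inl i) = b).card := h0
        _ = ∑ _b ∈ T,
            (Finset.univ.filter fun i : Fin n => u (Sum.inl i) = u (Sum.inl i0)).card :=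
          Finset.sum_congr rfl hclconst
        _ = _ := by rw [Finset.sum_const, smul_eq_mul]
    have hmsum : m = T.card *
        (Finset.univ.filter fun j : Fin m => u (Sum.inr j) = u (Sum.inr j0)).card := by
      have h0 := Finset.card_eq_sum_card_image (fun j : Fin m => u (Sum.inr j)) Finset.univ
      rw [Finset.card_univ, Fintype.card_fin] at h0
      calc m = ∑ b ∈ T', (Finset.univ.filter fun j : Fin m => u (Sum.inr j) = b).card := h0
        _ = ∑ b ∈ T, (Finset.univ.filter fun j : Fin m => u (Sum.inr j) = b).card :=
          (Finset.sum_congr hTeq (fun _ _ => rfl)).symm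
        _ = ∑ _b ∈ T,
            (Finset.univ.filter fun j : Fin m => u (Sum.inr j) = u (Sum.inr j0)).card :=
          Finset.sum_congr rfl hcrconst
        _ = _ := by rw [Finset.sum_const, smul_eq_mul]
    have hdvd : T.card ∣ 1 := by
      have h1d : T.card ∣ n := ⟨_, hnsum⟩
      have h2d : T.card ∣ m := ⟨_, hmsum⟩
      calc T.card ∣ Nat.gcd n m := Nat.dvd_gcd h1d h2d
        _ = 1 := hco
    obtain ⟨c0, hc0⟩ := Finset.card_eq_one.mp (Nat.dvd_one.mp hdvd)
    have hall : ∀ x, u x = c0 := by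
      intro x
      cases x with
      | inl i =>
        have hx : u (Sum.inl i) ∈ T := Finset.mem_image.mpr ⟨i, Finset.mem_univ _, rfl⟩
        rw [hc0] at hx
        simpa using hx
      | inr j =>
        have hx : u (Sum.inr j) ∈ T' := Finset.mem_image.mpr ⟨j, Finset.mem_univ _, rfl⟩
        rw [← hTeq, hc0] at hx
        simpa using hx
    rw [hall v, hall w]
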